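/- Contour integral–binomial sum identity. Let a, b be positive integers, c a nonnegative integer, α, β ∈ ℂ, and let ρ > max(|α|,|β|). Then (1/(2πi)) ∮_{|x|=ρ} x^c / ((x−α)^a (x−β)^b) dx = Σ_{m=a−1}^{c−b} C(m, a−1) · C(c−m−1, b−1) · α^{m−a+1} · β^{c−m−b}, where the sum is understood as empty (equal to 0) when c−b < a−1, and the contour is traversed counterclockwise. -/

import Mathlib

open MeasureTheory Real Complex Finset

/-- Expansion of `((z - α) ^ a)⁻¹` as a negative-binomial series in `1/z`. -/
private lemma auxHasSum {a : ℕ} (ha : 0 < a) {α z : ℂ} (h : ‖α‖ < ‖z‖) :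
    HasSum (fun i : ℕ => ((i + (a - 1)).choose (a - 1) : ℂ) * α ^ i * z ^ (-(a : ℤ) - i))
      (((z - α) ^ a)⁻¹) := by
  have hz0 : z ≠ 0 := by
    intro h0
    rw [h0, norm_zero] at h
    exact absurd h (norm_nonneg α).not_gt
  have hzα : z - α ≠ 0 := by
    intro h0
    rw [sub_eq_zero] at h0
    rw [← h0] at h
    exact lt_irrefl _ h
  have hr : ‖α / z‖ < 1 := by
    rw [norm_div]
    exact (div_lt_one ((norm_nonneg α).trans_lt h)).mpr h
  have H := (hasSum_choose_mul_geometric_of_norm_lt_one (a - 1) hr).mul_right (z ^ (-(a : ℤ)))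
  rw [Nat.sub_add_cancel ha] at H
  have hfun : ∀ i : ℕ, ((i + (a - 1)).choose (a - 1) : ℂ) * (α / z) ^ i * z ^ (-(a : ℤ)) =
      ((i + (a - 1)).choose (a - 1) : ℂ) * α ^ i * z ^ (-(a : ℤ) - i) := by
    intro i
    rw [div_pow, zpow_sub₀ hz0, zpow_natCast]
    ring
  rw [funext hfun] at H
  suffices hs : ((z - α) ^ a)⁻¹ = 1 / (1 - α / z) ^ a * z ^ (-(a : ℤ)) by rw [hs]; exact H
  have h1 : (1 : ℂ) - α / z = (z - α) / z := by field_simp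
  have hza : (z - α) ^ a ≠ 0 := pow_ne_zero _ hzα
  have hzp : z ^ a ≠ 0 := pow_ne_zero _ hz0
  rw [h1, div_pow, one_div, inv_div, zpow_neg, zpow_natCast]
  field_simp

/-- Summability of the norms of the series above. -/
private lemma auxSummable {a : ℕ} {α : ℂ} {ρ : ℝ} (h : ‖α‖ < ρ) (hρ : 0 < ρ) :
    Summable (fun i : ℕ =>
      ((i + (a - 1)).choose (a - 1) : ℝ) * ‖α‖ ^ i * ρ ^ (-(a : ℤ) - i)) := by
  have hr : ‖‖α‖ / ρ‖ < 1 := by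
    rw [Real.norm_eq_abs, _root_.abs_of_nonneg (by positivity)]
    exact (div_lt_one hρ).mpr h
  have := (summable_choose_mul_geometric_of_norm_lt_one (a - 1) hr).mul_right (ρ ^ (-(a : ℤ)))
  refine this.congr fun i => ?_
  rw [div_pow, show (-(a : ℤ) - i) = -(a : ℤ) - i by ring, zpow_sub₀ hρ.ne', zpow_natCast]
  ring

/-- Contour integral–binomial sum identity:
`(1/(2πi)) ∮_{|x|=ρ} x^c/((x−α)^a (x−β)^b) dx
  = Σ_{m=a−1}^{c−b} C(m,a−1) C(c−m−1,b−1) α^{m−a+1} β^{c−m−b}`,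
the sum being empty when `c−b < a−1`.  The index set is encoded as the set of
natural numbers `m` with `a−1 ≤ m` and `m+b ≤ c`. -/
theorem contour_integral_binomial_sum
    (a b c : ℕ) (ha : 0 < a) (hb : 0 < b) (α β : ℂ) (ρ : ℝ)
    (hρ : max ‖α‖ ‖β‖ < ρ) :
    (2 * Real.pi * Complex.I)⁻¹ *
        (∮ x in C(0, ρ), x ^ c / ((x - α) ^ a * (x - β) ^ b)) =
      ∑ m ∈ (Finset.Icc (a - 1) c).filter (fun m => m + b ≤ c),
        (m.choose (a - 1) : ℂ) * ((c - m - 1).choose (b - 1) : ℂ) *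
          α ^ (m + 1 - a) * β ^ (c - m - b) := by
  obtain ⟨hα, hβ⟩ := max_lt_iff.mp hρ
  have hρ0 : 0 < ρ := (norm_nonneg α).trans_lt hα
  have ha1 : a - 1 + 1 = a := Nat.succ_pred_eq_of_pos ha
  have hb1 : b - 1 + 1 = b := Nat.succ_pred_eq_of_pos hb
  set u : ℕ → ℂ := fun i => ((i + (a - 1)).choose (a - 1) : ℂ) * α ^ i with hu
  set v : ℕ → ℂ := fun j => ((j + (b - 1)).choose (b - 1) : ℂ) * β ^ j with hv
  set e : ℕ × ℕ → ℤ := fun p => (c : ℤ) - a - b - p.1 - p.2 with he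
  -- pointwise expansion of the integrand on the circle
  have key : ∀ z : ℂ, ‖z‖ = ρ →
      z ^ c / ((z - α) ^ a * (z - β) ^ b) = ∑' p : ℕ × ℕ, u p.1 * v p.2 * z ^ e p := by
    intro z hz
    have hzα : ‖α‖ < ‖z‖ := hz ▸ hα
    have hzβ : ‖β‖ < ‖z‖ := hz ▸ hβ
    have hz0 : z ≠ 0 := by
      intro h0
      rw [h0, norm_zero] at hz
      exact hρ0.ne hz
    have H1 := auxHasSum ha hzα
    have H2 := auxHasSum hb hzβ
    have S1 : Summable fun i : ℕ =>
        ‖((i + (a - 1)).choose (a - 1) : ℂ) * α ^ i * z ^ (-(a : ℤ) - i)‖ := by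
      refine (auxSummable hα hρ0 (a := a)).congr fun i => ?_
      rw [norm_mul, norm_mul, norm_zpow, norm_pow, hz, RCLike.norm_natCast]
    have S2 : Summable fun j : ℕ =>
        ‖((j + (b - 1)).choose (b - 1) : ℂ) * β ^ j * z ^ (-(b : ℤ) - j)‖ := by
      refine (auxSummable hβ hρ0 (a := b)).congr fun j => ?_
      rw [norm_mul, norm_mul, norm_zpow, norm_pow, hz, RCLike.norm_natCast]
    have Hprod := tsum_mul_tsum_of_summable_norm S1 S2
    rw [H1.tsum_eq, H2.tsum_eq] at Hprod
    have hstep : z ^ c / ((z - α) ^ a * (z - β) ^ b)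
        = z ^ c * (((z - α) ^ a)⁻¹ * ((z - β) ^ b)⁻¹) := by
      rw [div_eq_mul_inv, mul_inv]
    rw [hstep, Hprod, ← tsum_mul_left]
    refine tsum_congr fun p => ?_
    have hzp : z ^ e p = z ^ ((c : ℤ)) * z ^ (-(a : ℤ) - p.1) * z ^ (-(b : ℤ) - p.2) := by
      rw [← zpow_add₀ hz0, ← zpow_add₀ hz0]
      congr 1
      simp only [he]
      ring
    rw [hzp, zpow_natCast]
    simp only [hu, hv]
    ring
  -- the termwise integrands
  set F : ℕ × ℕ → ℝ → ℂ := fun p θ =>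
    circleMap 0 ρ θ * Complex.I * (u p.1 * v p.2 * circleMap 0 ρ θ ^ e p) with hF
  have hne : ∀ θ : ℝ, circleMap 0 ρ θ ≠ 0 := fun θ => circleMap_ne_center hρ0.ne'
  have hcont : ∀ p : ℕ × ℕ, Continuous (F p) := by
    intro p
    exact ((continuous_circleMap 0 ρ).mul continuous_const).mul
      (continuous_const.mul (((continuous_circleMap 0 ρ).zpow₀ (e p)
        (fun θ => Or.inl (hne θ)))))
  have hInt : ∀ p : ℕ × ℕ, IntegrableOn (F p) (Set.Ioc 0 (2 * π)) volume := fun p =>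
    (hcont p).integrableOn_Ioc
  have hnorm : ∀ p θ, ‖F p θ‖ = ρ * (‖u p.1‖ * ‖v p.2‖ * ρ ^ e p) := by
    intro p θ
    rw [hF]
    simp only [norm_mul, norm_circleMap_zero, Complex.norm_I, norm_zpow,
      _root_.abs_of_pos hρ0]
    ring
  have hInorm : ∀ p : ℕ × ℕ, ∫ θ in Set.Ioc 0 (2 * π), ‖F p θ‖ =
      (2 * π) * (ρ * (‖u p.1‖ * ‖v p.2‖ * ρ ^ e p)) := by
    intro p
    simp only [hnorm p]
    rw [setIntegral_const, Real.volume_real_Ioc, smul_eq_mul, sub_zero,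
      max_eq_left (by positivity)]
  have hSum : Summable fun p : ℕ × ℕ => ∫ θ in Set.Ioc 0 (2 * π), ‖F p θ‖ := by
    refine Summable.congr ?_ fun p => (hInorm p).symm
    have base := ((auxSummable hα hρ0 (a := a)).mul_of_nonneg (auxSummable hβ hρ0 (a := b))
      (fun i => by positivity) (fun j => by positivity)).mul_left
      ((2 * π) * (ρ * ρ ^ ((c : ℤ))))
    refine base.congr fun p => ?_
    have hexp : ρ ^ e p = ρ ^ ((c : ℤ)) * ρ ^ (-(a : ℤ) - p.1) * ρ ^ (-(b : ℤ) - p.2) := by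
      rw [← zpow_add₀ hρ0.ne', ← zpow_add₀ hρ0.ne']
      congr 1
      simp only [he]
      ring
    rw [hexp]
    simp only [hu, hv, norm_mul, norm_pow, RCLike.norm_natCast]
    ring
  -- rewrite the contour integral as a sum of integrals
  have hle : (0 : ℝ) ≤ 2 * π := by positivity
  have main : (∮ x in C(0, ρ), x ^ c / ((x - α) ^ a * (x - β) ^ b)) =
      ∑' p : ℕ × ℕ, ∫ θ in Set.Ioc 0 (2 * π), F p θ := by
    have h1 : (∮ x in C(0, ρ), x ^ c / ((x - α) ^ a * (x - β) ^ b)) =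
        ∫ θ in (0 : ℝ)..(2 * π), ∑' p : ℕ × ℕ, F p θ := by
      rw [circleIntegral]
      refine intervalIntegral.integral_congr fun θ _ => ?_
      rw [deriv_circleMap, smul_eq_mul, key _ (by simp [_root_.abs_of_pos hρ0]), ← tsum_mul_left]
    rw [h1, intervalIntegral.integral_of_le hle]
    exact (integral_tsum_of_summable_integral_norm hInt hSum).symm
  -- value of each termwise integral
  have hval : ∀ p : ℕ × ℕ, (∫ θ in Set.Ioc 0 (2 * π), F p θ) =
      u p.1 * v p.2 * (∮ z in C(0, ρ), (z - 0) ^ e p) := by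
    intro p
    rw [← intervalIntegral.integral_of_le hle]
    have : (∮ z in C(0, ρ), u p.1 * v p.2 * (z - 0) ^ e p) =
        ∫ θ in (0 : ℝ)..(2 * π), F p θ := by
      rw [circleIntegral]
      refine intervalIntegral.integral_congr fun θ _ => ?_
      rw [deriv_circleMap, smul_eq_mul, sub_zero]
    rw [← this, circleIntegral.integral_const_mul]
  rw [main]
  by_cases hab : a + b ≤ c + 1
  · -- nonempty case
    set n : ℕ := c + 1 - a - b with hn
    have htsum : (∑' p : ℕ × ℕ, ∫ θ in Set.Ioc 0 (2 * π), F p θ) =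
        ∑ p ∈ Finset.HasAntidiagonal.antidiagonal n, u p.1 * v p.2 * (2 * π * Complex.I) := by
      rw [tsum_eq_sum (s := Finset.HasAntidiagonal.antidiagonal n) ?_]
      · refine Finset.sum_congr rfl fun p hp => ?_
        rw [hval p]
        have hp' : p.1 + p.2 = n := Finset.HasAntidiagonal.mem_antidiagonal.mp hp
        have hep : e p = -1 := by simp only [he]; omega
        rw [hep]
        congr 1
        have : (∮ z in C(0, ρ), (z - 0) ^ (-1 : ℤ)) = ∮ z in C(0, ρ), (z - 0)⁻¹ := by
          refine circleIntegral.integral_congr hρ0.le fun z _ => ?_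
          rw [zpow_neg_one]
        rw [this, circleIntegral.integral_sub_inv_of_mem_ball (by
          simpa using hρ0)]
      · intro p hp
        rw [hval p]
        have hp' : p.1 + p.2 ≠ n := fun h => hp (Finset.HasAntidiagonal.mem_antidiagonal.mpr h)
        have hep : e p ≠ -1 := by simp only [he]; omega
        rw [circleIntegral.integral_sub_zpow_of_ne hep, mul_zero]
    rw [htsum, Finset.mul_sum]
    have hπI : (2 * ↑π * Complex.I) ≠ 0 := by
      simp [Real.pi_ne_zero, Complex.I_ne_zero, Complex.ofReal_ne_zero]
    have hterm : ∀ p ∈ Finset.HasAntidiagonal.antidiagonal n,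
        (2 * ↑π * Complex.I)⁻¹ * (u p.1 * v p.2 * (2 * ↑π * Complex.I)) = u p.1 * v p.2 := by
      intro p _
      field_simp
    rw [Finset.sum_congr rfl hterm]
    -- reindex the antidiagonal sum
    refine Finset.sum_nbij' (i := fun p => p.1 + (a - 1)) (j := fun m => (m - (a - 1), c - m - b))
      ?_ ?_ ?_ ?_ ?_
    · intro p hp
      have hp' : p.1 + p.2 = n := Finset.HasAntidiagonal.mem_antidiagonal.mp hp
      simp only [Finset.mem_filter, Finset.mem_Icc]
      omega
    · intro m hm
      simp only [Finset.mem_filter, Finset.mem_Icc] at hm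
      rw [Finset.HasAntidiagonal.mem_antidiagonal]
      show m - (a - 1) + (c - m - b) = n
      omega
    · intro p hp
      have hp' : p.1 + p.2 = n := Finset.HasAntidiagonal.mem_antidiagonal.mp hp
      show (p.1 + (a - 1) - (a - 1), c - (p.1 + (a - 1)) - b) = p
      have h1 : p.1 + (a - 1) - (a - 1) = p.1 := by omega
      have h2 : c - (p.1 + (a - 1)) - b = p.2 := by omega
      rw [h1, h2]
    · intro m hm
      simp only [Finset.mem_filter, Finset.mem_Icc] at hm
      show m - (a - 1) + (a - 1) = m
      omega
    · intro p hp
      have hp' : p.1 + p.2 = n := Finset.HasAntidiagonal.mem_antidiagonal.mp hp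
      show u p.1 * v p.2 = ((p.1 + (a - 1)).choose (a - 1) : ℂ) *
        ((c - (p.1 + (a - 1)) - 1).choose (b - 1) : ℂ) *
          α ^ (p.1 + (a - 1) + 1 - a) * β ^ (c - (p.1 + (a - 1)) - b)
      simp only [hu, hv]
      have h1 : p.1 + (a - 1) + 1 - a = p.1 := by omega
      have h2 : c - (p.1 + (a - 1)) - b = p.2 := by omega
      have h3 : c - (p.1 + (a - 1)) - 1 = p.2 + (b - 1) := by omega
      rw [h1, h2, h3]
      ring
  · -- empty case
    have hzero : ∀ p : ℕ × ℕ, (∫ θ in Set.Ioc 0 (2 * π), F p θ) = 0 := by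
      intro p
      rw [hval p]
      have hep : e p ≠ -1 := by simp only [he]; omega
      rw [circleIntegral.integral_sub_zpow_of_ne hep, mul_zero]
    rw [tsum_eq_sum (s := ∅) (fun p _ => hzero p)]
    rw [Finset.filter_false_of_mem ?_]
    · simp
    · intro m hm
      rw [Finset.mem_Icc] at hm
      omega
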